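/- Let n ≥ 2, p ≥ 2 and D ≥ 1 be integers. Then M_{p,D} = Σ_{(a,b) ∈ Q_{p,D} ∩ S} Ã_{a,b} in the group algebra, and M_{p,D} = 0 if and only if Q_{p,D} ∩ S is empty. -/

import Mathlib

open Finset

/-- The alternating sum `Ã(μ) = Σ_{σ ∈ S_n} sign(σ)·X^{σ·μ}` in the group
algebra `AddMonoidAlgebra ℤ (Fin n → ℤ)`, where `(σ·μ)_i = μ_{σ⁻¹(i)}`. -/
noncomputable def Atilde (n : ℕ) (μ : Fin n → ℤ) : AddMonoidAlgebra ℤ (Fin n → ℤ) :=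
  ∑ σ : Equiv.Perm (Fin n),
    (Equiv.Perm.sign σ : ℤ) • AddMonoidAlgebra.single (fun i => μ (σ⁻¹ i)) 1

/-- The staircase tuple `ρ̃ = (n−1, n−2, …, 1, 0)`. -/
def rhoT (n : ℕ) : Fin n → ℤ := fun i => (n : ℤ) - 1 - (i : ℤ)

/-- `Ã_{a,b} = Σ Ã(ρ̃ − a(e_u − e_v))` over ordered pairs `u ≠ v` with
`v − u = a − b` (the roots of `sl_n` of height `a − b`). -/
noncomputable def AtildeAB (n : ℕ) (a b : ℕ) : AddMonoidAlgebra ℤ (Fin n → ℤ) :=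
  ∑ uv : Fin n × Fin n,
    if uv.1 ≠ uv.2 ∧ ((uv.2 : ℤ) - (uv.1 : ℤ) = (a : ℤ) - (b : ℤ)) then
      Atilde n (rhoT n - (a : ℤ) • (Pi.single uv.1 1 - Pi.single uv.2 1))
    else 0

/-- `M_{p,D} = Σ Ã_{a,b}` over pairs `(a,b)` of positive integers with
`a·b = p·D` and `p ∣ b` (all such pairs lie in `[1, p·D]²`). -/
noncomputable def Mpd (n p D : ℕ) : AddMonoidAlgebra ℤ (Fin n → ℤ) :=
  ∑ ab ∈ (Finset.Icc 1 (p * D) ×ˢ Finset.Icc 1 (p * D)).filter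
      (fun ab => ab.1 * ab.2 = p * D ∧ p ∣ ab.2),
    AtildeAB n ab.1 ab.2


/-- The finite set `Q_{p,D} ∩ S` of pairs `(a,b)` of positive integers with
`a·b = p·D`, `p ∣ b`, `p ∤ a`, `0 < |a − b| < n` and `a + b > n` (all such
pairs lie in `[1, p·D]²`). -/
def QSfin (n p D : ℕ) : Finset (ℕ × ℕ) :=
  (Finset.Icc 1 (p * D) ×ˢ Finset.Icc 1 (p * D)).filter
    (fun ab => ab.1 * ab.2 = p * D ∧ p ∣ ab.2 ∧ ¬ p ∣ ab.1 ∧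
      0 < |(ab.1 : ℤ) - (ab.2 : ℤ)| ∧ |(ab.1 : ℤ) - (ab.2 : ℤ)| < (n : ℤ) ∧
      n < ab.1 + ab.2)

noncomputable def mu (n a : ℕ) (u v : Fin n) : Fin n → ℤ :=
  rhoT n - (a : ℤ) • (Pi.single u 1 - Pi.single v 1)

lemma mu_eq {n : ℕ} (a : ℕ) {u v : Fin n} (huv : u ≠ v) (i : Fin n) :
    mu n a u v i = if i = u then (n:ℤ) - 1 - (u:ℤ) - (a:ℤ)
      else if i = v then (n:ℤ) - 1 - (v:ℤ) + (a:ℤ) else (n:ℤ) - 1 - (i:ℤ) := by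
  simp only [mu, Pi.sub_apply, Pi.smul_apply, Pi.single_apply, smul_eq_mul, rhoT]
  split_ifs with h1 h2 <;> simp_all <;> ring

lemma mu_u {n a : ℕ} {u v : Fin n} (huv : u ≠ v) :
    mu n a u v u = (n:ℤ) - 1 - (u:ℤ) - (a:ℤ) := by
  rw [mu_eq a huv]; simp

lemma mu_v {n a : ℕ} {u v : Fin n} (huv : u ≠ v) :
    mu n a u v v = (n:ℤ) - 1 - (v:ℤ) + (a:ℤ) := by
  rw [mu_eq a huv]; simp [Ne.symm huv]

lemma mu_o {n a : ℕ} {u v i : Fin n} (huv : u ≠ v) (hiu : i ≠ u) (hiv : i ≠ v) :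
    mu n a u v i = (n:ℤ) - 1 - (i:ℤ) := by
  rw [mu_eq a huv]; simp [hiu, hiv]

lemma Atilde_apply (n : ℕ) (μ ν : Fin n → ℤ) :
    (Atilde n μ).coeff ν = ∑ σ : Equiv.Perm (Fin n),
      (Equiv.Perm.sign σ : ℤ) * (if (fun i => μ (σ⁻¹ i)) = ν then 1 else 0) := by
  unfold Atilde
  rw [AddMonoidAlgebra.coeff_sum, Finset.sum_apply']
  refine Finset.sum_congr rfl fun σ _ => ?_
  rw [AddMonoidAlgebra.coeff_smul, Finsupp.smul_apply, AddMonoidAlgebra.coeff_single_apply, smul_eq_mul]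

lemma Atilde_perm (n : ℕ) (μ : Fin n → ℤ) (τ : Equiv.Perm (Fin n)) :
    Atilde n (fun i => μ (τ⁻¹ i)) = (Equiv.Perm.sign τ : ℤ) • Atilde n μ := by
  unfold Atilde
  rw [Finset.smul_sum]
  refine Fintype.sum_equiv (Equiv.mulRight τ) _ _ fun σ => ?_
  have h0 : (fun i => μ (τ⁻¹ (σ⁻¹ i))) = (fun i => μ ((σ * τ)⁻¹ i)) := by
    funext i; simp [mul_inv_rev, Equiv.Perm.mul_apply]
  simp only [Equiv.coe_mulRight, h0, smul_smul]
  congr 1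
  have : (Equiv.Perm.sign (σ * τ)) = Equiv.Perm.sign σ * Equiv.Perm.sign τ :=
    Equiv.Perm.sign_mul σ τ
  rw [this]
  push_cast
  have hτ : (Equiv.Perm.sign τ : ℤ) * (Equiv.Perm.sign τ : ℤ) = 1 := by
    rw [← Units.val_mul, Int.units_mul_self, Units.val_one]
  ring_nf
  ring_nf at hτ
  rw [hτ, one_mul]

lemma Atilde_eq_zero_of_eq {n : ℕ} {μ : Fin n → ℤ} {i j : Fin n} (hij : i ≠ j)
    (h : μ i = μ j) : Atilde n μ = 0 := by
  have h1 : (fun k => μ ((Equiv.swap i j)⁻¹ k)) = μ := by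
    funext k
    rw [Equiv.swap_inv]
    rcases eq_or_ne k i with rfl | hki
    · rw [Equiv.swap_apply_left]; exact h.symm
    rcases eq_or_ne k j with rfl | hkj
    · rw [Equiv.swap_apply_right]; exact h
    · rw [Equiv.swap_apply_of_ne_of_ne hki hkj]
  have h2 := Atilde_perm n μ (Equiv.swap i j)
  rw [h1, Equiv.Perm.sign_swap hij] at h2
  have h3 : Atilde n μ = - Atilde n μ := by
    simpa using h2
  ext g
  have h4 := congrArg (fun f : AddMonoidAlgebra ℤ (Fin n → ℤ) => f.coeff g) h3
  have h5 : (- Atilde n μ).coeff g = -((Atilde n μ).coeff g) := rfl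
  simp only [h5] at h4
  have h6 : (Atilde n μ).coeff g = 0 := by omega
  simp [h6]

lemma AtildeAB_def (n a b : ℕ) : AtildeAB n a b = ∑ uv : Fin n × Fin n,
    if uv.1 ≠ uv.2 ∧ ((uv.2 : ℤ) - (uv.1 : ℤ) = (a : ℤ) - (b : ℤ)) then
      Atilde n (mu n a uv.1 uv.2) else 0 := rfl

lemma mu_swap {n : ℕ} (a b : ℕ) {u v : Fin n} (huv : u ≠ v)
    (hd : (v:ℤ) - (u:ℤ) = (b:ℤ) - (a:ℤ)) :
    mu n b u v = fun i => mu n a v u ((Equiv.swap u v)⁻¹ i) := by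
  funext i
  rw [Equiv.swap_inv]
  rcases eq_or_ne i u with rfl | hiu
  · rw [Equiv.swap_apply_left, mu_u huv, mu_u (Ne.symm huv)]
    linarith
  rcases eq_or_ne i v with rfl | hiv
  · rw [Equiv.swap_apply_right, mu_v huv, mu_v (Ne.symm huv)]
    linarith
  · rw [Equiv.swap_apply_of_ne_of_ne hiu hiv, mu_o huv hiu hiv, mu_o (Ne.symm huv) hiv hiu]

lemma AtildeAB_neg (n a b : ℕ) : AtildeAB n b a = - AtildeAB n a b := by
  have key : ∀ uv : Fin n × Fin n,
      (if uv.1 ≠ uv.2 ∧ ((uv.2 : ℤ) - (uv.1 : ℤ) = (b : ℤ) - (a : ℤ)) then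
        Atilde n (mu n b uv.1 uv.2) else 0)
      = (fun wv : Fin n × Fin n =>
          - (if wv.1 ≠ wv.2 ∧ ((wv.2 : ℤ) - (wv.1 : ℤ) = (a : ℤ) - (b : ℤ)) then
            Atilde n (mu n a wv.1 wv.2) else 0)) ((Equiv.prodComm (Fin n) (Fin n)) uv) := by
    rintro ⟨u, v⟩
    simp only [Equiv.prodComm_apply, Prod.swap]
    show (if u ≠ v ∧ ((v:ℤ) - (u:ℤ) = (b:ℤ) - (a:ℤ)) then Atilde n (mu n b u v) else 0) = -(if v ≠ u ∧ ((u:ℤ) - (v:ℤ) = (a:ℤ) - (b:ℤ)) then Atilde n (mu n a v u) else 0)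
    by_cases hc : u ≠ v ∧ (v:ℤ) - (u:ℤ) = (b:ℤ) - (a:ℤ)
    · rw [if_pos hc, if_pos ⟨hc.1.symm, by linarith [hc.2]⟩]
      rw [mu_swap a b hc.1 hc.2, Atilde_perm, Equiv.Perm.sign_swap hc.1]
      simp
    · rw [if_neg hc, if_neg, neg_zero]
      rintro ⟨h1, h2⟩; exact hc ⟨h1.symm, by linarith⟩
  have e1 : (∑ uv : Fin n × Fin n,
      if uv.1 ≠ uv.2 ∧ ((uv.2 : ℤ) - (uv.1 : ℤ) = (b : ℤ) - (a : ℤ)) then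
        Atilde n (mu n b uv.1 uv.2) else 0)
      = ∑ wv : Fin n × Fin n,
        - (if wv.1 ≠ wv.2 ∧ ((wv.2 : ℤ) - (wv.1 : ℤ) = (a : ℤ) - (b : ℤ)) then
          Atilde n (mu n a wv.1 wv.2) else 0) :=
    Fintype.sum_equiv (Equiv.prodComm (Fin n) (Fin n)) _ _ key
  rw [AtildeAB_def, AtildeAB_def, e1]
  simp

lemma AtildeAB_eq_zero_of_no_pair (n a b : ℕ)
    (h : ∀ u v : Fin n, u ≠ v → (v:ℤ) - (u:ℤ) = (a:ℤ) - (b:ℤ) → False) :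
    AtildeAB n a b = 0 := by
  rw [AtildeAB_def]
  refine Finset.sum_eq_zero fun uv _ => ?_
  rw [if_neg]; rintro ⟨h1, h2⟩; exact h _ _ h1 h2

lemma Atilde_mu_zero_small {n a b : ℕ} {u v : Fin n} (ha : 1 ≤ a) (hb : 1 ≤ b)
    (hab : a + b ≤ n) (huv : u ≠ v) (hd : (v:ℤ) - (u:ℤ) = (a:ℤ) - (b:ℤ)) :
    Atilde n (mu n a u v) = 0 := by
  have h3 := u.isLt; have h4 := v.isLt
  have hdn : v.val + b = u.val + a := by omega
  rcases lt_or_ge (u.val + a) n with h1 | h1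
  · set w : Fin n := ⟨u.val + a, h1⟩ with hw
    have hwval : w.val = u.val + a := rfl
    have hwu : w ≠ u := by simp only [ne_eq, Fin.ext_iff]; omega
    have hwv : w ≠ v := by simp only [ne_eq, Fin.ext_iff]; omega
    refine Atilde_eq_zero_of_eq hwu.symm ?_
    rw [mu_u huv, mu_o huv hwu hwv]
    omega
  · have hva : a ≤ v.val := by omega
    set w : Fin n := ⟨v.val - a, by omega⟩ with hw
    have hwval : w.val = v.val - a := rfl
    have hwv : w ≠ v := by simp only [ne_eq, Fin.ext_iff]; omega
    have hwu : w ≠ u := by simp only [ne_eq, Fin.ext_iff]; omega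
    refine Atilde_eq_zero_of_eq hwv.symm ?_
    rw [mu_v huv, mu_o huv hwu hwv]
    omega

lemma corner_of_inj {n a b : ℕ} {u v : Fin n} (ha : 1 ≤ a) (hb : 1 ≤ b)
    (huv : u ≠ v) (hd : (v:ℤ) - (u:ℤ) = (a:ℤ) - (b:ℤ))
    (hinj : Function.Injective (mu n a u v)) :
    n ≤ u.val + a ∧ v.val + 1 ≤ a := by
  have h3 := u.isLt; have h4 := v.isLt
  have hdn : v.val + b = u.val + a := by omega
  constructor
  · by_contra h
    push_neg at h
    set w : Fin n := ⟨u.val + a, h⟩ with hw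
    have hwval : w.val = u.val + a := rfl
    have hwu : w ≠ u := by simp only [ne_eq, Fin.ext_iff]; omega
    have hwv : w ≠ v := by simp only [ne_eq, Fin.ext_iff]; omega
    have he : mu n a u v u = mu n a u v w := by
      rw [mu_u huv, mu_o huv hwu hwv]
      omega
    exact hwu (hinj he).symm
  · by_contra h
    push_neg at h
    have hva : a ≤ v.val := by omega
    set w : Fin n := ⟨v.val - a, by omega⟩ with hw
    have hwval : w.val = v.val - a := rfl
    have hwv : w ≠ v := by simp only [ne_eq, Fin.ext_iff]; omega
    have hwu : w ≠ u := by simp only [ne_eq, Fin.ext_iff]; omega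
    have he : mu n a u v v = mu n a u v w := by
      rw [mu_v huv, mu_o huv hwu hwv]
      omega
    exact hwv (hinj he).symm

lemma mu_inj {n a : ℕ} {u v : Fin n} (huv : u ≠ v)
    (hu : n ≤ u.val + a) (hv : v.val + 1 ≤ a) :
    Function.Injective (mu n a u v) := by
  intro i j hij
  rw [mu_eq a huv i, mu_eq a huv j] at hij
  have h1 := i.isLt; have h2 := j.isLt; have h3 := u.isLt; have h4 := v.isLt
  have e : i.val = j.val := by
    split_ifs at hij <;> simp_all [Fin.ext_iff] <;> omega
  exact Fin.ext e

lemma Atilde_self_apply {n : ℕ} {μ : Fin n → ℤ} (hinj : Function.Injective μ) :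
    (Atilde n μ).coeff μ = 1 := by
  rw [Atilde_apply, Finset.sum_eq_single 1]
  · simp
  · intro σ _ hσ
    rw [if_neg, mul_zero]
    intro h
    apply hσ
    have h2 : ∀ i, σ⁻¹ i = i := fun i => hinj (congrFun h i)
    ext i
    have h5 := h2 (σ i)
    rw [Equiv.Perm.inv_def, Equiv.symm_apply_apply] at h5
    exact congrArg Fin.val h5.symm
  · intro h; simp at h

lemma Atilde_apply_eq_zero {n : ℕ} {μ ν : Fin n → ℤ}
    (h : ∀ σ : Equiv.Perm (Fin n), (fun i => μ (σ⁻¹ i)) ≠ ν) :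
    (Atilde n μ).coeff ν = 0 := by
  rw [Atilde_apply]
  refine Finset.sum_eq_zero fun σ _ => ?_
  rw [if_neg (h σ), mul_zero]

lemma indep {n : ℕ} {a b a' b' : ℕ} {u v u' v' : Fin n}
    (ha : 1 ≤ a) (hb : 1 ≤ b) (ha' : 1 ≤ a') (hb' : 1 ≤ b')
    (huv : u ≠ v) (hd : (v:ℤ) - (u:ℤ) = (a:ℤ) - (b:ℤ))
    (huv' : u' ≠ v') (hd' : (v':ℤ) - (u':ℤ) = (a':ℤ) - (b':ℤ))
    (hu : n ≤ u.val + a) (hv : v.val + 1 ≤ a)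
    (hinj : Function.Injective (mu n a' u' v'))
    (σ : Equiv.Perm (Fin n)) (hσ : ∀ j, mu n a' u' v' j = mu n a u v (σ j)) :
    (a' = a ∧ b' = b ∧ u' = u ∧ v' = v) ∨ (a' = b ∧ b' = a) := by
  obtain ⟨hu', hv'⟩ := corner_of_inj ha' hb' huv' hd' hinj
  have h3 := u.isLt; have h4 := v.isLt; have h3' := u'.isLt; have h4' := v'.isLt
  have hdn : v.val + b = u.val + a := by omega
  have hdn' : v'.val + b' = u'.val + a' := by omega
  have step2 : u'.val + a' = u.val + a := by
    have e1 := hσ u'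
    rw [mu_u huv'] at e1
    rcases eq_or_ne (σ u') u with h | h
    · rw [h, mu_u huv] at e1
      omega
    · exfalso
      rcases eq_or_ne (σ u') v with h2 | h2
      · rw [h2, mu_v huv] at e1; omega
      · rw [mu_o huv h h2] at e1
        have := (σ u').isLt
        omega
  have step3 : v'.val + a = v.val + a' := by
    have e1 := hσ v'
    rw [mu_v huv'] at e1
    rcases eq_or_ne (σ v') v with h | h
    · rw [h, mu_v huv] at e1
      omega
    · exfalso
      rcases eq_or_ne (σ v') u with h2 | h2
      · rw [h2, mu_u huv] at e1; omega
      · rw [mu_o huv h2 h] at e1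
        have := (σ v').isLt
        omega
  have humem : u' = u ∨ u' = v := by
    by_contra h
    push_neg at h
    obtain ⟨h5, h6⟩ := h
    have e1 := hσ (σ.symm u')
    rw [Equiv.apply_symm_apply, mu_o huv h5 h6] at e1
    rcases eq_or_ne (σ.symm u') u' with h7 | h7
    · rw [h7, mu_u huv'] at e1; omega
    rcases eq_or_ne (σ.symm u') v' with h8 | h8
    · rw [h8, mu_v huv'] at e1; omega
    · rw [mu_o huv' h7 h8] at e1
      have h9 := (σ.symm u').isLt
      have : (σ.symm u').val = u'.val := by omega
      exact h7 (Fin.ext this)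
  have hvmem : v' = u ∨ v' = v := by
    by_contra h
    push_neg at h
    obtain ⟨h5, h6⟩ := h
    have e1 := hσ (σ.symm v')
    rw [Equiv.apply_symm_apply, mu_o huv h5 h6] at e1
    rcases eq_or_ne (σ.symm v') u' with h7 | h7
    · rw [h7, mu_u huv'] at e1; omega
    rcases eq_or_ne (σ.symm v') v' with h8 | h8
    · rw [h8, mu_v huv'] at e1; omega
    · rw [mu_o huv' h7 h8] at e1
      have h9 := (σ.symm v').isLt
      have : (σ.symm v').val = v'.val := by omega
      exact h8 (Fin.ext this)
  rcases humem with h | h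
  · subst h
    have hv'v : v' = v := by
      rcases hvmem with h | h
      · exact absurd h.symm huv'
      · exact h
    subst hv'v
    left
    refine ⟨by omega, by omega, rfl, rfl⟩
  · subst h
    have hv'u : v' = u := by
      rcases hvmem with h | h
      · exact h
      · exact absurd h.symm huv'
    subst hv'u
    right
    constructor <;> omega

lemma mem_QSfin {n p D a b : ℕ} (h : (a, b) ∈ QSfin n p D) :
    1 ≤ a ∧ 1 ≤ b ∧ a * b = p * D ∧ p ∣ b ∧ ¬ p ∣ a ∧
      ((a:ℤ) - b < n ∧ (b:ℤ) - a < n) ∧ n < a + b := by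
  simp only [QSfin, Finset.mem_filter, Finset.mem_product, Finset.mem_Icc] at h
  obtain ⟨⟨⟨ha1, _⟩, hb1, _⟩, hprod, hdvd, hndvd, habs0, habs1, hsum⟩ := h
  refine ⟨ha1, hb1, hprod, hdvd, hndvd, ?_, hsum⟩
  rcases abs_cases ((a:ℤ) - (b:ℤ)) with ⟨e, _⟩ | ⟨e, _⟩ <;> constructor <;> omega

lemma eval_term {n p D : ℕ} (hp : 2 ≤ p)
    {a₀ b₀ : ℕ} (h₀ : (a₀, b₀) ∈ QSfin n p D)
    {u₀ v₀ : Fin n} (hc₀ : u₀ ≠ v₀) (hd₀ : (v₀:ℤ) - (u₀:ℤ) = (a₀:ℤ) - (b₀:ℤ))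
    (hu₀ : n ≤ u₀.val + a₀) (hv₀ : v₀.val + 1 ≤ a₀)
    {a b : ℕ} (h1 : (a, b) ∈ QSfin n p D)
    {u v : Fin n} (hcuv : u ≠ v) (hduv : (v:ℤ) - (u:ℤ) = (a:ℤ) - (b:ℤ)) :
    (Atilde n (mu n a u v)).coeff (mu n a₀ u₀ v₀) =
      if a = a₀ ∧ b = b₀ ∧ u = u₀ ∧ v = v₀ then 1 else 0 := by
  obtain ⟨ha₁, hb₁, _, hdvd₀, hndvd₀, _, _⟩ := mem_QSfin h₀
  obtain ⟨ha₁', hb₁', _, hdvd₁, hndvd₁, _, _⟩ := mem_QSfin h1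
  have hμinj := mu_inj hc₀ hu₀ hv₀
  by_cases hinj : Function.Injective (mu n a u v)
  · by_cases hex : ∃ σ : Equiv.Perm (Fin n),
        (fun i => mu n a u v (σ⁻¹ i)) = mu n a₀ u₀ v₀
    · obtain ⟨σ, hσ⟩ := hex
      have hσ' : ∀ j, mu n a u v j = mu n a₀ u₀ v₀ (σ j) := by
        intro j
        have h5 := congrFun hσ (σ j)
        simpa using h5
      rcases indep ha₁ hb₁ ha₁' hb₁' hc₀ hd₀ hcuv hduv hu₀ hv₀ hinj σ hσ'
        with ⟨rfl, rfl, rfl, rfl⟩ | ⟨h5, h6⟩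
      · rw [if_pos ⟨rfl, rfl, rfl, rfl⟩]
        exact Atilde_self_apply hμinj
      · exact absurd (h5 ▸ hdvd₀) hndvd₁
    · have hne : ¬(a = a₀ ∧ b = b₀ ∧ u = u₀ ∧ v = v₀) := by
        rintro ⟨rfl, rfl, rfl, rfl⟩
        exact hex ⟨1, by simp⟩
      rw [if_neg hne]
      exact Atilde_apply_eq_zero fun σ h => hex ⟨σ, h⟩
  · have hne : ¬(a = a₀ ∧ b = b₀ ∧ u = u₀ ∧ v = v₀) := by
      rintro ⟨rfl, rfl, rfl, rfl⟩
      exact hinj hμinj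
    rw [if_neg hne]
    obtain ⟨i, j, hij, hne2⟩ := Function.not_injective_iff.mp hinj
    rw [Atilde_eq_zero_of_eq hne2 hij]
    rfl

lemma exists_uv {n a b : ℕ} (hn : 2 ≤ n) (ha : 1 ≤ a) (hb : 1 ≤ b) (hab : a ≠ b)
    (h1 : (a:ℤ) - b < n ∧ (b:ℤ) - a < n) (h2 : n < a + b) :
    ∃ u v : Fin n, u ≠ v ∧ (v:ℤ) - (u:ℤ) = (a:ℤ) - (b:ℤ) ∧
      n ≤ u.val + a ∧ v.val + 1 ≤ a := by
  obtain ⟨h1a, h1b⟩ := h1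
  have hlt1 : a < b + n := by omega
  have hlt2 : b < a + n := by omega
  set V := max (n - b) (a - b) with hVdef
  have hA : n - b ≤ V := le_max_left _ _
  have hB : a - b ≤ V := le_max_right _ _
  have hC : V ≤ a - 1 := max_le (by omega) (by omega)
  have hV : V < n := max_lt (by omega) (by omega)
  have hU : V + b - a < n := by omega
  refine ⟨⟨V + b - a, hU⟩, ⟨V, hV⟩, ?_, ?_, ?_, ?_⟩
  · have e1 : (⟨V + b - a, hU⟩ : Fin n).val = V + b - a := rfl
    have e2 : (⟨V, hV⟩ : Fin n).val = V := rfl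
    simp only [ne_eq, Fin.ext_iff, e1, e2]
    omega
  · have e1 : (⟨V + b - a, hU⟩ : Fin n).val = V + b - a := rfl
    have e2 : (⟨V, hV⟩ : Fin n).val = V := rfl
    omega
  · have e1 : (⟨V + b - a, hU⟩ : Fin n).val = V + b - a := rfl
    omega
  · have e2 : (⟨V, hV⟩ : Fin n).val = V := rfl
    omega

lemma AtildeAB_zero_small {n a b : ℕ} (ha : 1 ≤ a) (hb : 1 ≤ b) (hab : a + b ≤ n) :
    AtildeAB n a b = 0 := by
  rw [AtildeAB_def]
  refine Finset.sum_eq_zero fun uv _ => ?_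
  split_ifs with h
  · exact Atilde_mu_zero_small ha hb hab h.1 h.2
  · rfl

lemma AtildeAB_zero_large {n a b : ℕ} (h : (n:ℤ) ≤ |(a:ℤ) - (b:ℤ)|) :
    AtildeAB n a b = 0 := by
  refine AtildeAB_eq_zero_of_no_pair n a b fun u v huv hd => ?_
  have h3 := u.isLt; have h4 := v.isLt
  rcases abs_cases ((a:ℤ) - (b:ℤ)) with ⟨e, _⟩ | ⟨e, _⟩ <;> omega

lemma AtildeAB_zero_diag {n a : ℕ} : AtildeAB n a a = 0 := by
  refine AtildeAB_eq_zero_of_no_pair n a a fun u v huv hd => ?_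
  have : u.val = v.val := by omega
  exact huv (Fin.ext this)

/-- Lemma 4.6 of the paper.
For `n ≥ 2`, `p ≥ 2`, `D ≥ 1`: `M_{p,D} = Σ_{(a,b) ∈ Q_{p,D} ∩ S} Ã_{a,b}`, and
`M_{p,D} = 0` if and only if `Q_{p,D} ∩ S` is empty. -/
theorem stmt11 (n p D : ℕ) (hn : 2 ≤ n) (hp : 2 ≤ p) (hD : 1 ≤ D) :
    (Mpd n p D = ∑ ab ∈ QSfin n p D, AtildeAB n ab.1 ab.2) ∧
    (Mpd n p D = 0 ↔ QSfin n p D = ∅) := by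
  classical
  set T := (Finset.Icc 1 (p * D) ×ˢ Finset.Icc 1 (p * D)).filter
      (fun ab => ab.1 * ab.2 = p * D ∧ p ∣ ab.2) with hT
  have key : Mpd n p D = ∑ ab ∈ QSfin n p D, AtildeAB n ab.1 ab.2 := by
    have hsplit : Mpd n p D
        = (∑ ab ∈ T.filter (fun ab => p ∣ ab.1), AtildeAB n ab.1 ab.2)
          + ∑ ab ∈ T.filter (fun ab => ¬ p ∣ ab.1), AtildeAB n ab.1 ab.2 := by
      rw [Mpd, ← hT, ← Finset.sum_filter_add_sum_filter_not T (fun ab => p ∣ ab.1)]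
    have h1 : ∑ ab ∈ T.filter (fun ab => p ∣ ab.1), AtildeAB n ab.1 ab.2 = 0 := by
      apply Finset.sum_involution (fun ab _ => (ab.2, ab.1))
      · intro ab _
        show AtildeAB n ab.1 ab.2 + AtildeAB n ab.2 ab.1 = 0
        rw [AtildeAB_neg n ab.1 ab.2]
        exact add_neg_cancel _
      · intro ab _ hne heq
        apply hne
        have h5 : ab.2 = ab.1 := congrArg Prod.fst heq
        rw [← h5]
        exact AtildeAB_zero_diag
      · intro ab ha
        simp only [hT, Finset.mem_filter, Finset.mem_product, Finset.mem_Icc] at ha ⊢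
        obtain ⟨⟨⟨⟨ha1, ha2⟩, hb1, hb2⟩, hprod, hdvd2⟩, hdvd1⟩ := ha
        exact ⟨⟨⟨⟨hb1, hb2⟩, ha1, ha2⟩, by rw [mul_comm]; exact hprod, hdvd1⟩, hdvd2⟩
      · intro ab _
        rfl
    have hsub : QSfin n p D ⊆ T.filter (fun ab => ¬ p ∣ ab.1) := by
      intro ab hab
      simp only [QSfin, hT, Finset.mem_filter, Finset.mem_product, Finset.mem_Icc] at hab ⊢
      tauto
    have h2 : ∑ ab ∈ T.filter (fun ab => ¬ p ∣ ab.1), AtildeAB n ab.1 ab.2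
        = ∑ ab ∈ QSfin n p D, AtildeAB n ab.1 ab.2 := by
      refine (Finset.sum_subset hsub fun ab hmem hnot => ?_).symm
      simp only [hT, Finset.mem_filter, Finset.mem_product, Finset.mem_Icc] at hmem
      obtain ⟨⟨⟨⟨ha1, ha2⟩, hb1, hb2⟩, hprod, hdvd2⟩, hdvd1⟩ := hmem
      simp only [QSfin, Finset.mem_filter, Finset.mem_product, Finset.mem_Icc] at hnot
      push_neg at hnot
      have hne : ab.1 ≠ ab.2 := by
        intro h; exact hdvd1 (h ▸ hdvd2)
      have habs0 : 0 < |(ab.1 : ℤ) - (ab.2 : ℤ)| := by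
        rw [abs_pos, sub_ne_zero]
        exact_mod_cast hne
      rcases le_or_gt (n:ℤ) (|(ab.1 : ℤ) - (ab.2 : ℤ)|) with hcase | hcase
      · exact AtildeAB_zero_large hcase
      · have hsum : ab.1 + ab.2 ≤ n :=
          hnot ⟨⟨ha1, ha2⟩, hb1, hb2⟩ hprod hdvd2 hdvd1 habs0 hcase
        exact AtildeAB_zero_small ha1 hb1 (by omega)
    rw [hsplit, h1, h2, zero_add]
  refine ⟨key, ?_, fun h => by rw [key, h]; exact Finset.sum_empty⟩
  intro h0
  by_contra hne
  obtain ⟨⟨a₀, b₀⟩, hmem⟩ := Finset.nonempty_iff_ne_empty.mpr hne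
  obtain ⟨ha₁, hb₁, hprod, hdvd, hndvd, habs, hsum⟩ := mem_QSfin hmem
  have hab : a₀ ≠ b₀ := fun h => hndvd (h ▸ hdvd)
  obtain ⟨u₀, v₀, hc₀, hd₀, hu₀, hv₀⟩ := exists_uv hn ha₁ hb₁ hab habs hsum
  have hμ := mu_inj hc₀ hu₀ hv₀
  have hM := congrArg (fun f : AddMonoidAlgebra ℤ (Fin n → ℤ) => f.coeff (mu n a₀ u₀ v₀))
    (key.symm.trans h0)
  rw [AddMonoidAlgebra.coeff_sum, Finset.sum_apply'] at hM
  have hz : (0 : AddMonoidAlgebra ℤ (Fin n → ℤ)).coeff (mu n a₀ u₀ v₀) = 0 := rfl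
  rw [hz] at hM
  have hL : ∑ ab ∈ QSfin n p D, (AtildeAB n ab.1 ab.2).coeff (mu n a₀ u₀ v₀) = 1 := by
    rw [Finset.sum_eq_single (a₀, b₀)]
    · rw [AtildeAB_def, AddMonoidAlgebra.coeff_sum, Finset.sum_apply']
      rw [Finset.sum_eq_single (u₀, v₀)]
      · rw [if_pos ⟨hc₀, hd₀⟩]
        exact Atilde_self_apply hμ
      · intro uv _ hneuv
        by_cases hc : uv.1 ≠ uv.2 ∧ ((uv.2 : ℤ) - (uv.1 : ℤ) = (a₀ : ℤ) - (b₀ : ℤ))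
        · rw [if_pos hc, eval_term hp hmem hc₀ hd₀ hu₀ hv₀ hmem hc.1 hc.2, if_neg]
          rintro ⟨-, -, h7, h8⟩
          exact hneuv (Prod.ext h7 h8)
        · rw [if_neg hc]
          rfl
      · intro h; exact absurd (Finset.mem_univ _) h
    · intro ab habmem hneab
      rw [AtildeAB_def, AddMonoidAlgebra.coeff_sum, Finset.sum_apply']
      refine Finset.sum_eq_zero fun uv _ => ?_
      by_cases hc : uv.1 ≠ uv.2 ∧ ((uv.2 : ℤ) - (uv.1 : ℤ) = (ab.1 : ℤ) - (ab.2 : ℤ))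
      · rw [if_pos hc, eval_term hp hmem hc₀ hd₀ hu₀ hv₀ habmem hc.1 hc.2, if_neg]
        rintro ⟨h5, h6, -, -⟩
        exact hneab (Prod.ext h5 h6)
      · rw [if_neg hc]
        rfl
    · intro h; exact absurd hmem h
  rw [hL] at hM
  exact one_ne_zero hM
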